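/- Let n ≥ 2 and let g = z⁴·tₙ(tₙ − 1)² − t₁t₂⋯t_{n−1}(t₁ − 1)²(t₂ − 1)²⋯(t_{n−1} − 1)² ∈ ℂ[t₁,…,tₙ,z]. Then the quotient ring ℂ[t₁,…,tₙ,z]/(g) is an integral domain, and its field of fractions is isomorphic as a ℂ-algebra to the field ℂ(s₁,…,sₙ) of rational functions in n variables over ℂ. -/

import Mathlib

open MvPolynomial Polynomial

section helpers

lemma my_prime_X_sub_C {σ : Type*} [DecidableEq σ] {R : Type*} [CommRing R] [IsDomain R]
    (v : σ) (a : R) : Prime (MvPolynomial.X v - MvPolynomial.C a : MvPolynomial σ R) := by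
  let e0 : { e : Option {u : σ // u ≠ v} ≃ σ // e none = v } :=
    (Equiv.optionSubtype v).symm (Equiv.refl _)
  let e : σ ≃ Option {u : σ // u ≠ v} := (e0 : Option {u : σ // u ≠ v} ≃ σ).symm
  have hev : e v = none := by
    have := e0.property
    simp only [e]
    exact (Equiv.symm_apply_eq _).mpr this.symm
  rw [← MulEquiv.prime_iff (MvPolynomial.renameEquiv R e).toMulEquiv]
  have h1 : (MvPolynomial.renameEquiv R e).toMulEquiv (MvPolynomial.X v - MvPolynomial.C a)
      = (MvPolynomial.X (e v) - MvPolynomial.C a : MvPolynomial (Option {u : σ // u ≠ v}) R) := by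
    simp [MvPolynomial.renameEquiv_apply, map_sub, MvPolynomial.rename_C, MvPolynomial.rename_X]
  rw [h1, hev, ← MulEquiv.prime_iff (MvPolynomial.optionEquivLeft R _).toMulEquiv]
  have h2 : (MvPolynomial.optionEquivLeft R _).toMulEquiv
      (MvPolynomial.X none - MvPolynomial.C a : MvPolynomial (Option {u : σ // u ≠ v}) R)
      = Polynomial.X - Polynomial.C (MvPolynomial.C a) := by
    show (MvPolynomial.optionEquivLeft R _) (MvPolynomial.X none - MvPolynomial.C a) = _
    rw [map_sub, MvPolynomial.optionEquivLeft_X_none, MvPolynomial.optionEquivLeft_C]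
  rw [h2]
  exact Polynomial.prime_X_sub_C _

lemma my_prime_X' {σ : Type*} [DecidableEq σ] {R : Type*} [CommRing R] [IsDomain R]
    (v : σ) : Prime (MvPolynomial.X v : MvPolynomial σ R) := by
  simpa using my_prime_X_sub_C v (0 : R)


lemma ker_eval_linear {V : Type*} [CommRing V] [IsDomain V] [UniqueFactorizationMonoid V]
    {K : Type*} [Field K] [Algebra V K] [IsFractionRing V K]
    (c₁ c₀ : V) (hc₁ : c₁ ≠ 0)
    (hcop : ∀ v : V, v ∣ c₁ → v ∣ c₀ → IsUnit v)
    (β : K) (hβ : algebraMap V K c₁ * β + algebraMap V K c₀ = 0) :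
    RingHom.ker (Polynomial.eval₂RingHom (algebraMap V K) β)
      = Ideal.span {Polynomial.C c₁ * Polynomial.X + Polynomial.C c₀} := by
  set ℓ : V[X] := Polynomial.C c₁ * Polynomial.X + Polynomial.C c₀ with hℓ
  have hinj : Function.Injective (algebraMap V K) := IsFractionRing.injective V K
  have hc₁K : algebraMap V K c₁ ≠ 0 := fun h => hc₁ (hinj (by simpa using h))
  have hβval : β = -(algebraMap V K c₀) / algebraMap V K c₁ := by
    field_simp
    linear_combination hβ
  have hdegℓ : ℓ.degree = 1 := Polynomial.degree_linear hc₁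
  have hℓ0 : ℓ ≠ 0 := fun h => by rw [h] at hdegℓ; simp at hdegℓ
  have hcoeff : ∀ v : V, Polynomial.C v ∣ ℓ → IsUnit v := by
    intro v hv
    obtain ⟨w, hw⟩ := hv
    refine hcop v ⟨w.coeff 1, ?_⟩ ⟨w.coeff 0, ?_⟩
    · have := congrArg (fun q => Polynomial.coeff q 1) hw
      simpa [hℓ, Polynomial.coeff_C_mul] using this
    · have := congrArg (fun q => Polynomial.coeff q 0) hw
      simpa [hℓ, Polynomial.coeff_C_mul] using this
  have hirr : Irreducible ℓ := by
    constructor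
    · intro hu
      have := Polynomial.degree_eq_zero_of_isUnit hu
      rw [hdegℓ] at this; exact absurd this (by simp)
    · intro a b hab
      have ha0 : a ≠ 0 := by rintro rfl; rw [zero_mul] at hab; exact absurd hab hℓ0
      have hb0 : b ≠ 0 := by rintro rfl; rw [mul_zero] at hab; exact absurd hab hℓ0
      have hnd : a.natDegree + b.natDegree = 1 := by
        have : ℓ.natDegree = 1 := Polynomial.natDegree_eq_of_degree_eq_some hdegℓ
        rw [← this, hab, Polynomial.natDegree_mul ha0 hb0]
      rcases Nat.eq_zero_or_pos a.natDegree with h | h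
      · left
        obtain ⟨x, hx⟩ := Polynomial.natDegree_eq_zero.mp h
        have : IsUnit x := hcoeff x (by rw [hx, hab]; exact dvd_mul_right a b)
        rw [← hx]; exact Polynomial.isUnit_C.mpr this
      · right
        have hbz : b.natDegree = 0 := by omega
        obtain ⟨x, hx⟩ := Polynomial.natDegree_eq_zero.mp hbz
        have : IsUnit x := hcoeff x (by rw [hx, hab]; exact dvd_mul_left b a)
        rw [← hx]; exact Polynomial.isUnit_C.mpr this
  have hprime : Prime ℓ := hirr.prime
  apply le_antisymm
  · -- ker ⊆ span
    intro q hq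
    rw [RingHom.mem_ker] at hq
    have hq' : (q.map (algebraMap V K)).eval β = 0 := by
      rw [← Polynomial.eval₂_eq_eval_map]; exact hq
    obtain ⟨r, hr⟩ := (Polynomial.dvd_iff_isRoot.mpr hq')
    -- q̂ = ℓ̂ * s
    have hcb : (algebraMap V K c₁) * β = -(algebraMap V K c₀) := by linear_combination hβ
    have hℓmap : ℓ.map (algebraMap V K)
        = Polynomial.C (algebraMap V K c₁) * (Polynomial.X - Polynomial.C β) := by
      rw [hℓ, Polynomial.map_add, Polynomial.map_mul, Polynomial.map_C, Polynomial.map_C,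
        Polynomial.map_X, mul_sub, ← Polynomial.C_mul, hcb, map_neg]
      ring
    set s : K[X] := Polynomial.C (algebraMap V K c₁)⁻¹ * r with hs
    have hqs : q.map (algebraMap V K) = ℓ.map (algebraMap V K) * s := by
      rw [hℓmap, hs, hr]
      rw [show Polynomial.C (algebraMap V K c₁) * (Polynomial.X - Polynomial.C β) *
          (Polynomial.C (algebraMap V K c₁)⁻¹ * r)
          = (Polynomial.C (algebraMap V K c₁) * Polynomial.C (algebraMap V K c₁)⁻¹) *
            ((Polynomial.X - Polynomial.C β) * r) by ring, ← Polynomial.C_mul,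
        mul_inv_cancel₀ hc₁K, Polynomial.C_1, one_mul]
    obtain ⟨b, hb⟩ := IsLocalization.integerNormalization_map_to_map
      (nonZeroDivisors V) s
    have hmapeq : (Polynomial.C (b : V) * q).map (algebraMap V K)
        = (ℓ * IsLocalization.integerNormalization (nonZeroDivisors V) s).map
            (algebraMap V K) := by
      rw [Polynomial.map_mul, Polynomial.map_mul, hb, Polynomial.map_C, hqs,
        ← IsScalarTower.algebraMap_smul K ((b : V)) s, Polynomial.smul_eq_C_mul]
      ring
    have heq : Polynomial.C (b : V) * q
        = ℓ * IsLocalization.integerNormalization (nonZeroDivisors V) s :=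
      Polynomial.map_injective _ hinj hmapeq
    have hb0 : (b : V) ≠ 0 := nonZeroDivisors.coe_ne_zero b
    have hdvd : ℓ ∣ Polynomial.C (b : V) * q := ⟨_, heq⟩
    have hnotC : ¬ ℓ ∣ Polynomial.C (b : V) := by
      intro hdvd'
      have := Polynomial.degree_le_of_dvd hdvd' (by simpa using hb0)
      rw [hdegℓ, Polynomial.degree_C hb0] at this
      exact absurd this (by simp)
    have : ℓ ∣ q := (hprime.dvd_mul.mp hdvd).resolve_left hnotC
    exact Ideal.mem_span_singleton.mpr this
  · rw [Ideal.span_le]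
    intro x hx
    simp only [Set.mem_singleton_iff] at hx
    subst hx
    rw [SetLike.mem_coe, RingHom.mem_ker]
    rw [hℓ]
    simp only [Polynomial.coe_eval₂RingHom, Polynomial.eval₂_add, Polynomial.eval₂_mul,
      Polynomial.eval₂_C, Polynomial.eval₂_X]
    linear_combination hβ

end helpers


set_option maxHeartbeats 2000000 in
set_option synthInstance.maxHeartbeats 400000 in
/-- for `n ≥ 2` and
`g = z⁴·tₙ(tₙ - 1)² - t₁t₂⋯t_{n-1}(t₁ - 1)²(t₂ - 1)²⋯(t_{n-1} - 1)² ∈ ℂ[t₁,…,tₙ,z]`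
(the variable `some i` is `tᵢ` and `none` is `z`), the quotient ring
`ℂ[t₁,…,tₙ,z]/(g)` is an integral domain whose field of fractions is isomorphic as a
`ℂ`-algebra to the rational function field `ℂ(s₁,…,sₙ)`. -/
theorem stmt_12 (n : ℕ) (hn : 2 ≤ n)
    (g : MvPolynomial (Option (Fin n)) ℂ)
    (hg : g = X none ^ 4 *
          ((X (some ⟨n - 1, by omega⟩) : MvPolynomial (Option (Fin n)) ℂ) *
            (X (some ⟨n - 1, by omega⟩) - 1) ^ 2) -
        ∏ i ∈ Finset.univ.erase (⟨n - 1, by omega⟩ : Fin n),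
          ((X (some i) : MvPolynomial (Option (Fin n)) ℂ) * (X (some i) - 1) ^ 2)) :
    IsDomain (MvPolynomial (Option (Fin n)) ℂ ⧸ Ideal.span {g}) ∧
      Nonempty ((FractionRing (MvPolynomial (Option (Fin n)) ℂ ⧸ Ideal.span {g})) ≃ₐ[ℂ]
        FractionRing (MvPolynomial (Fin n) ℂ)) := by
  classical
  set m : Fin n := ⟨n - 1, by omega⟩ with hmdef
  set p : Fin n := ⟨n - 2, by omega⟩ with hpdef
  have hpm : p ≠ m := by
    simp only [hpdef, hmdef, Ne, Fin.mk.injEq]; omega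
  have hpmem : p ∈ Finset.univ.erase m := Finset.mem_erase.mpr ⟨hpm, Finset.mem_univ _⟩
  -- polynomials in the target ring Bt = ℂ[s₁,…,sₙ]
  set Pp : MvPolynomial (Fin n) ℂ :=
    ∏ i ∈ (Finset.univ.erase m).erase p, (X i * (X i - 1) ^ 2) with hPp
  set c₁ : MvPolynomial (Fin n) ℂ := X m ^ 4 * X p ^ 3 - Pp with hc₁def
  set c₀ : MvPolynomial (Fin n) ℂ := X m ^ 4 * X p ^ 2 * (1 - X p) with hc₀def
  -- evaluation points for nonvanishing
  set σ0 : Fin n → ℂ := fun i => if i = m ∨ i = p then 0 else 2 with hσ0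
  set σ1 : Fin n → ℂ := fun i => if i = m then 0 else if i = p then 1 else 2 with hσ1
  have hPp1 : ∀ (σ : Fin n → ℂ), (∀ i, i ≠ m → i ≠ p → σ i = 2) → MvPolynomial.eval σ Pp ≠ 0 := by
    intro σ hσ
    rw [hPp, map_prod]
    apply Finset.prod_ne_zero_iff.mpr
    intro i hi
    have hip : i ≠ p := (Finset.mem_erase.mp hi).1
    have him : i ≠ m := (Finset.mem_erase.mp (Finset.mem_erase.mp hi).2).1
    rw [map_mul, map_pow, map_sub, map_one, MvPolynomial.eval_X, hσ i him hip]
    norm_num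
  have hσ0Pp : MvPolynomial.eval σ0 Pp ≠ 0 := hPp1 σ0 (by intro i h1 h2; simp [hσ0, h1, h2])
  have hσ1Pp : MvPolynomial.eval σ1 Pp ≠ 0 := hPp1 σ1 (by intro i h1 h2; simp [hσ1, h1, h2])
  have hc₁0 : c₁ ≠ 0 := by
    intro h
    have := congrArg (MvPolynomial.eval σ0) h
    rw [hc₁def] at this
    simp [hσ0, map_sub, map_mul, map_pow, MvPolynomial.eval_X] at this
    exact hσ0Pp this
  -- elements of K
  set Z : FractionRing (MvPolynomial (Fin n) ℂ) :=
    algebraMap (MvPolynomial (Fin n) ℂ) _ (X m) with hZ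
  set A : FractionRing (MvPolynomial (Fin n) ℂ) :=
    algebraMap (MvPolynomial (Fin n) ℂ) _ (X p) with hA
  set PP : FractionRing (MvPolynomial (Fin n) ℂ) :=
    algebraMap (MvPolynomial (Fin n) ℂ) _ Pp with hPPdef
  have hinjK : Function.Injective
      (algebraMap (MvPolynomial (Fin n) ℂ) (FractionRing (MvPolynomial (Fin n) ℂ))) :=
    IsFractionRing.injective _ _
  have hPP0 : PP ≠ 0 := by
    rw [hPPdef, Ne, IsFractionRing.to_map_eq_zero_iff]
    intro h; rw [h] at hσ0Pp; simp at hσ0Pp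
  set D : FractionRing (MvPolynomial (Fin n) ℂ) := PP - Z ^ 4 * A ^ 3 with hD
  have hD0 : D ≠ 0 := by
    rw [hD, sub_ne_zero]
    intro hEq
    have h2 : algebraMap (MvPolynomial (Fin n) ℂ) (FractionRing (MvPolynomial (Fin n) ℂ)) Pp
        = algebraMap (MvPolynomial (Fin n) ℂ) _ (X m ^ 4 * X p ^ 3) := by
      rw [map_mul, map_pow, map_pow]; rw [hPPdef] at hEq; rw [hZ, hA] at hEq; exact hEq
    have h3 := congrArg (MvPolynomial.eval σ0) (hinjK h2)
    rw [map_mul, map_pow, map_pow, MvPolynomial.eval_X, MvPolynomial.eval_X] at h3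
    have hm0 : σ0 m = 0 := by simp [hσ0]
    have hp0 : σ0 p = 0 := by simp [hσ0]
    rw [hm0, hp0] at h3
    norm_num at h3
    exact hσ0Pp h3
  have hE0 : Z ^ 4 * A ^ 2 - PP ≠ 0 := by
    rw [sub_ne_zero]
    intro hEq
    have h2 : algebraMap (MvPolynomial (Fin n) ℂ) (FractionRing (MvPolynomial (Fin n) ℂ))
        (X m ^ 4 * X p ^ 2) = algebraMap (MvPolynomial (Fin n) ℂ) _ Pp := by
      rw [map_mul, map_pow, map_pow]; rw [hPPdef] at hEq; rw [hZ, hA] at hEq; exact hEq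
    have h3 := congrArg (MvPolynomial.eval σ0) (hinjK h2)
    rw [map_mul, map_pow, map_pow, MvPolynomial.eval_X, MvPolynomial.eval_X] at h3
    have hm0 : σ0 m = 0 := by simp [hσ0]
    have hp0 : σ0 p = 0 := by simp [hσ0]
    rw [hm0, hp0] at h3
    norm_num at h3
    exact hσ0Pp h3.symm
  set β : FractionRing (MvPolynomial (Fin n) ℂ) := Z ^ 4 * A ^ 2 * (1 - A) / D with hβ
  -- the map ψ : R → K
  set u : Option (Fin n) → FractionRing (MvPolynomial (Fin n) ℂ) := fun v =>
    v.elim Z (fun i => if i = m then PP * (1 - A) / D else if i = p then β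
      else algebraMap (MvPolynomial (Fin n) ℂ) _ (X i)) with hu
  set ψ : MvPolynomial (Option (Fin n)) ℂ →ₐ[ℂ] FractionRing (MvPolynomial (Fin n) ℂ) :=
    aeval u with hψ
  have hval_m : ψ (X (some m)) = PP * (1 - A) / D := by simp [hψ, hu]
  have hval_p : ψ (X (some p)) = β := by simp [hψ, hu, hpm]
  have hval_z : ψ (X none) = Z := by simp [hψ, hu]
  have hval_i : ∀ i, i ≠ m → i ≠ p →
      ψ (X (some i)) = algebraMap (MvPolynomial (Fin n) ℂ) _ (X i) := by
    intro i h1 h2; simp [hψ, hu, h1, h2]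
  have hprodPP : ψ (∏ i ∈ (Finset.univ.erase m).erase p,
      ((X (some i) : MvPolynomial (Option (Fin n)) ℂ) * (X (some i) - 1) ^ 2)) = PP := by
    rw [map_prod, hPPdef, hPp, map_prod]
    apply Finset.prod_congr rfl
    intro i hi
    have hip : i ≠ p := (Finset.mem_erase.mp hi).1
    have him : i ≠ m := (Finset.mem_erase.mp (Finset.mem_erase.mp hi).2).1
    rw [map_mul, map_pow, map_sub, map_one, hval_i i him hip,
      map_mul, map_pow, map_sub, map_one]
  have hsplit : g = X none ^ 4 * (X (some m) * (X (some m) - 1) ^ 2)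
      - (X (some p) * (X (some p) - 1) ^ 2) * ∏ i ∈ (Finset.univ.erase m).erase p,
        ((X (some i) : MvPolynomial (Option (Fin n)) ℂ) * (X (some i) - 1) ^ 2) := by
    rw [hg, ← Finset.mul_prod_erase _ _ hpmem]
  have hψg : ψ g = 0 := by
    rw [hsplit]
    simp only [map_sub, map_mul, map_pow, map_one, hval_z, hval_m, hval_p, hprodPP]
    rw [hβ, hD]
    have hD0' : PP - Z ^ 4 * A ^ 3 ≠ 0 := by rw [← hD]; exact hD0
    field_simp
    ring
  -- ψ₁ : W → K  (variable `some m` plays the role of α)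
  set u₁ : Option (Fin n) → FractionRing (MvPolynomial (Fin n) ℂ) := fun v =>
    v.elim Z (fun i => if i = m then A else if i = p then β
      else algebraMap (MvPolynomial (Fin n) ℂ) _ (X i)) with hu₁
  set ψ₁ : MvPolynomial (Option (Fin n)) ℂ →ₐ[ℂ] FractionRing (MvPolynomial (Fin n) ℂ) :=
    aeval u₁ with hψ₁
  -- Φ₁ : R → W
  set w₁ : Option (Fin n) → MvPolynomial (Option (Fin n)) ℂ := fun v =>
    v.elim (X none) (fun i => if i = m then 1 + X (some m) * (X (some p) - 1) else X (some i))
    with hw₁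
  set Φ₁ : MvPolynomial (Option (Fin n)) ℂ →ₐ[ℂ] MvPolynomial (Option (Fin n)) ℂ :=
    aeval w₁ with hΦ₁
  have hv₁m : ψ₁ (X (some m)) = A := by simp [hψ₁, hu₁]
  have hv₁p : ψ₁ (X (some p)) = β := by simp [hψ₁, hu₁, hpm]
  have hv₁z : ψ₁ (X none) = Z := by simp [hψ₁, hu₁]
  have hv₁i : ∀ i, i ≠ m → i ≠ p →
      ψ₁ (X (some i)) = algebraMap (MvPolynomial (Fin n) ℂ) _ (X i) := by
    intro i h1 h2; simp [hψ₁, hu₁, h1, h2]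
  have hΦm : Φ₁ (X (some m)) = 1 + X (some m) * (X (some p) - 1) := by simp [hΦ₁, hw₁]
  have hΦo : ∀ v, v ≠ some m → Φ₁ (X v) = X v := by
    intro v hv
    cases v with
    | none => simp [hΦ₁, hw₁]
    | some i =>
      have : i ≠ m := fun h => hv (by rw [h])
      simp [hΦ₁, hw₁, this]
  have hcomp : ∀ f, ψ₁ (Φ₁ f) = ψ f := by
    have : ψ₁.comp Φ₁ = ψ := by
      apply MvPolynomial.algHom_ext
      intro v
      cases v with
      | none =>
        rw [AlgHom.comp_apply, hΦo none (by simp), hv₁z, hval_z]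
      | some i =>
        by_cases him : i = m
        · rw [AlgHom.comp_apply, him, hΦm, map_add, map_one, map_mul, map_sub, map_one,
            hv₁m, hv₁p, hval_m, hβ, hD]
          have hD0' : PP - Z ^ 4 * A ^ 3 ≠ 0 := by rw [← hD]; exact hD0
          rw [div_sub_one hD0', mul_div_assoc', one_add_div hD0', div_left_inj' hD0']
          ring
        · by_cases hip : i = p
          · rw [AlgHom.comp_apply, hΦo (some i) (by simpa using him), hip, hv₁p, hval_p]
          · rw [AlgHom.comp_apply, hΦo (some i) (by simpa using him), hv₁i i him hip,
              hval_i i him hip]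
    intro f
    rw [← this, AlgHom.comp_apply]
  -- the polynomial g₁, linear in X (some p)
  set PW : MvPolynomial (Option (Fin n)) ℂ :=
    ∏ i ∈ (Finset.univ.erase m).erase p, (X (some i) * (X (some i) - 1) ^ 2) with hPW
  set g₁ : MvPolynomial (Option (Fin n)) ℂ :=
    (X none ^ 4 * X (some m) ^ 3 - PW) * X (some p)
      + X none ^ 4 * X (some m) ^ 2 * (1 - X (some m)) with hg₁
  have hΦPW : Φ₁ PW = PW := by
    rw [hPW, map_prod]
    apply Finset.prod_congr rfl
    intro i hi
    have hip : i ≠ p := (Finset.mem_erase.mp hi).1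
    have him : i ≠ m := (Finset.mem_erase.mp (Finset.mem_erase.mp hi).2).1
    rw [map_mul, map_pow, map_sub, map_one, hΦo (some i) (by simp [him])]
  have hΦz : Φ₁ (X none) = X none := hΦo none (by simp)
  have hΦp : Φ₁ (X (some p)) = X (some p) := hΦo (some p) (by simpa using hpm)
  have hΦ₁g : Φ₁ g = (X (some p) - 1) ^ 2 * g₁ := by
    rw [hsplit]
    simp only [map_sub, map_mul, map_pow, map_one, map_add, hΦz, hΦp, hΦm, hΦPW, hg₁]
    ring
  -- transport along e_W to a polynomial ring in one variable
  set r : Option (Fin n) ≃ Option (Fin n) :=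
    (Equiv.swap (some m) (some p)).trans (Equiv.swap none (some m)) with hr
  set e_W : MvPolynomial (Option (Fin n)) ℂ ≃ₐ[ℂ] Polynomial (MvPolynomial (Fin n) ℂ) :=
    (renameEquiv ℂ r).trans (optionEquivLeft ℂ (Fin n)) with he_W
  -- swap computations
  have hrp : r (some p) = none := by
    rw [hr]
    simp only [Equiv.trans_apply]
    rw [Equiv.swap_apply_right, Equiv.swap_apply_right]
  have hrz : r none = some m := by
    rw [hr]
    simp only [Equiv.trans_apply]
    rw [Equiv.swap_apply_of_ne_of_ne (Ne.symm (Option.some_ne_none m))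
      (Ne.symm (Option.some_ne_none p)), Equiv.swap_apply_left]
  have hrm : r (some m) = some p := by
    rw [hr]
    simp only [Equiv.trans_apply]
    rw [Equiv.swap_apply_left, Equiv.swap_apply_of_ne_of_ne (Option.some_ne_none p)
      (fun hh => hpm (Option.some_injective _ hh))]
  have hri : ∀ i, i ≠ m → i ≠ p → r (some i) = some i := by
    intro i h1 h2
    rw [hr]
    simp only [Equiv.trans_apply]
    rw [Equiv.swap_apply_of_ne_of_ne (fun hh => h1 (Option.some_injective _ hh))
      (fun hh => h2 (Option.some_injective _ hh)),
      Equiv.swap_apply_of_ne_of_ne (Option.some_ne_none i)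
      (fun hh => h1 (Option.some_injective _ hh))]
  have heWp : e_W (X (some p)) = Polynomial.X := by
    rw [he_W]
    simp only [AlgEquiv.trans_apply, renameEquiv_apply, rename_X, hrp, optionEquivLeft_X_none]
  have heWz : e_W (X none) = Polynomial.C (X m) := by
    rw [he_W]
    simp only [AlgEquiv.trans_apply, renameEquiv_apply, rename_X, hrz, optionEquivLeft_X_some]
  have heWm : e_W (X (some m)) = Polynomial.C (X p) := by
    rw [he_W]
    simp only [AlgEquiv.trans_apply, renameEquiv_apply, rename_X, hrm, optionEquivLeft_X_some]
  have heWi : ∀ i, i ≠ m → i ≠ p → e_W (X (some i)) = Polynomial.C (X i) := by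
    intro i h1 h2
    rw [he_W]
    simp only [AlgEquiv.trans_apply, renameEquiv_apply, rename_X, hri i h1 h2,
      optionEquivLeft_X_some]
  have heWC : ∀ a : ℂ, e_W (MvPolynomial.C a) = Polynomial.C (MvPolynomial.C a) := by
    intro a
    rw [he_W]
    simp only [AlgEquiv.trans_apply, renameEquiv_apply, rename_C, optionEquivLeft_C]
  have heWPW : e_W PW = Polynomial.C Pp := by
    rw [hPW, map_prod, hPp, map_prod]
    apply Finset.prod_congr rfl
    intro i hi
    have hip : i ≠ p := (Finset.mem_erase.mp hi).1
    have him : i ≠ m := (Finset.mem_erase.mp (Finset.mem_erase.mp hi).2).1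
    rw [map_mul, map_pow, map_sub, map_one, heWi i him hip,
      map_mul, map_pow, map_sub, map_one]
  have hg₁ℓ : e_W g₁ = Polynomial.C c₁ * Polynomial.X + Polynomial.C c₀ := by
    rw [hg₁]
    simp only [map_add, map_mul, map_sub, map_pow, map_one, heWp, heWz, heWm, heWPW]
    rw [hc₁def, hc₀def]
    simp only [map_sub, map_mul, map_pow, map_one]
  have hβlin : algebraMap (MvPolynomial (Fin n) ℂ) (FractionRing (MvPolynomial (Fin n) ℂ)) c₁ * β
      + algebraMap (MvPolynomial (Fin n) ℂ) (FractionRing (MvPolynomial (Fin n) ℂ)) c₀ = 0 := by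
    rw [hc₁def, hc₀def]
    simp only [map_sub, map_mul, map_pow, map_one]
    rw [← hZ, ← hA, ← hPPdef, hβ, hD]
    have hD0' : PP - Z ^ 4 * A ^ 3 ≠ 0 := by rw [← hD]; exact hD0
    field_simp
    ring
  have hevc₁ : ∀ (σ : Fin n → ℂ), σ m = 0 →
      MvPolynomial.eval σ c₁ = - MvPolynomial.eval σ Pp := by
    intro σ hσm
    rw [hc₁def, map_sub, map_mul, map_pow, map_pow, MvPolynomial.eval_X,
      MvPolynomial.eval_X, hσm]
    ring
  have hcop : ∀ v : MvPolynomial (Fin n) ℂ, v ∣ c₁ → v ∣ c₀ → IsUnit v := by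
    intro v hv1 hv0
    by_contra hvu
    have hvne : v ≠ 0 := by rintro rfl; rw [zero_dvd_iff] at hv1; exact hc₁0 hv1
    obtain ⟨q, hqirr, hqdvd⟩ := WfDvdMonoid.exists_irreducible_factor hvu hvne
    have hqc₀ : q ∣ c₀ := hqdvd.trans hv0
    have hqc₁ : q ∣ c₁ := hqdvd.trans hv1
    have hqpr : Prime q := UniqueFactorizationMonoid.irreducible_iff_prime.mp hqirr
    rw [hc₀def] at hqc₀
    have hcontra : ∀ (w : MvPolynomial (Fin n) ℂ) (σ : Fin n → ℂ), Prime w → q ∣ w →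
        σ m = 0 → MvPolynomial.eval σ w = 0 → MvPolynomial.eval σ Pp ≠ 0 → False := by
      intro w σ hw hqw hσm hew hPpσ
      have hass := hqirr.associated_of_dvd hw.irreducible hqw
      have hwc₁ : w ∣ c₁ := hass.symm.dvd.trans hqc₁
      obtain ⟨t, ht⟩ := hwc₁
      have h0 : MvPolynomial.eval σ c₁ = 0 := by rw [ht, map_mul, hew, zero_mul]
      rw [hevc₁ σ hσm] at h0
      exact hPpσ (neg_eq_zero.mp h0)
    rcases hqpr.dvd_mul.mp hqc₀ with h | h
    · rcases hqpr.dvd_mul.mp h with h' | h'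
      · exact hcontra (X m) σ0 (my_prime_X' m) (hqpr.dvd_of_dvd_pow h') (by simp [hσ0])
          (by rw [MvPolynomial.eval_X]; simp [hσ0]) hσ0Pp
      · exact hcontra (X p) σ0 (my_prime_X' p) (hqpr.dvd_of_dvd_pow h') (by simp [hσ0])
          (by rw [MvPolynomial.eval_X]; simp [hσ0]) hσ0Pp
    · have hpr : Prime (1 - X p : MvPolynomial (Fin n) ℂ) := by
        have h1 := (my_prime_X_sub_C p (1 : ℂ)).neg
        have h2 : -(X p - MvPolynomial.C 1) = (1 - X p : MvPolynomial (Fin n) ℂ) := by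
          rw [map_one]; ring
        rwa [h2] at h1
      exact hcontra (1 - X p) σ1 hpr h (by simp [hσ1])
        (by rw [map_sub, map_one, MvPolynomial.eval_X]; simp [hσ1, hpm]) hσ1Pp
  have hker_line := ker_eval_linear c₁ c₀ hc₁0 hcop β hβlin
  have hΨe : ∀ w, Polynomial.eval₂ (algebraMap (MvPolynomial (Fin n) ℂ)
      (FractionRing (MvPolynomial (Fin n) ℂ))) β (e_W w) = ψ₁ w := by
    intro w
    induction w using MvPolynomial.induction_on with
    | C a =>
      rw [heWC a, Polynomial.eval₂_C, hψ₁, MvPolynomial.aeval_C,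
        IsScalarTower.algebraMap_apply ℂ (MvPolynomial (Fin n) ℂ)
          (FractionRing (MvPolynomial (Fin n) ℂ)), MvPolynomial.algebraMap_eq]
    | add f f' hf hf' => rw [map_add, Polynomial.eval₂_add, hf, hf', map_add]
    | mul_X f v hf =>
      rw [map_mul, Polynomial.eval₂_mul, hf, map_mul]
      congr 1
      cases v with
      | none => rw [heWz, Polynomial.eval₂_C, hv₁z, hZ]
      | some i =>
        by_cases him : i = m
        · rw [him, heWm, Polynomial.eval₂_C, hv₁m, hA]
        · by_cases hip : i = p
          · rw [hip, heWp, Polynomial.eval₂_X, hv₁p]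
          · rw [heWi i him hip, Polynomial.eval₂_C, hv₁i i him hip]
  have hψ₁g₁ : Polynomial.eval₂ (algebraMap (MvPolynomial (Fin n) ℂ)
      (FractionRing (MvPolynomial (Fin n) ℂ))) β (e_W g₁) = 0 := by
    rw [hg₁ℓ, Polynomial.eval₂_add, Polynomial.eval₂_mul, Polynomial.eval₂_C,
      Polynomial.eval₂_X, Polynomial.eval₂_C]
    exact hβlin
  have hkerψ₁ : RingHom.ker ψ₁.toRingHom = Ideal.span {g₁} := by
    ext x
    rw [RingHom.mem_ker]
    constructor
    · intro hx
      have hx' : e_W x ∈ RingHom.ker (Polynomial.eval₂RingHom (algebraMap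
          (MvPolynomial (Fin n) ℂ) (FractionRing (MvPolynomial (Fin n) ℂ))) β) := by
        rw [RingHom.mem_ker, Polynomial.coe_eval₂RingHom, hΨe x]
        exact hx
      rw [hker_line, ← hg₁ℓ] at hx'
      obtain ⟨t, ht⟩ := Ideal.mem_span_singleton.mp hx'
      refine Ideal.mem_span_singleton.mpr ⟨e_W.symm t, ?_⟩
      apply e_W.injective
      rw [map_mul, ht, AlgEquiv.apply_symm_apply]
    · intro hx
      obtain ⟨t, ht⟩ := Ideal.mem_span_singleton.mp hx
      show ψ₁ x = 0
      rw [← hΨe x, ht, map_mul, Polynomial.eval₂_mul, hψ₁g₁, zero_mul]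
  -- the ring R and its fraction field
  have hhp : Prime (X (some p) - 1 : MvPolynomial (Option (Fin n)) ℂ) := by
    have h1 := my_prime_X_sub_C (some p) (1 : ℂ)
    rwa [map_one] at h1
  set ι : MvPolynomial (Option (Fin n)) ℂ →+*
      FractionRing (MvPolynomial (Option (Fin n)) ℂ) :=
    algebraMap (MvPolynomial (Option (Fin n)) ℂ)
      (FractionRing (MvPolynomial (Option (Fin n)) ℂ)) with hι
  have hinjR : Function.Injective ι := IsFractionRing.injective _ _
  have hh0 : ι (X (some p)) - 1 ≠ 0 := by
    intro hc
    apply hhp.ne_zero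
    apply hinjR
    rw [map_sub, map_one, map_zero, hc]
  set w₂ : Option (Fin n) → FractionRing (MvPolynomial (Option (Fin n)) ℂ) := fun v =>
    v.elim (ι (X none)) (fun i => if i = m then
      (ι (X (some m)) - 1) / (ι (X (some p)) - 1) else ι (X (some i))) with hw₂
  set Φ₂ : MvPolynomial (Option (Fin n)) ℂ →ₐ[ℂ]
      FractionRing (MvPolynomial (Option (Fin n)) ℂ) := aeval w₂ with hΦ₂
  have hΦ₂m : Φ₂ (X (some m)) = (ι (X (some m)) - 1) / (ι (X (some p)) - 1) := by
    simp [hΦ₂, hw₂]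
  have hΦ₂o : ∀ v, v ≠ some m → Φ₂ (X v) = ι (X v) := by
    intro v hv
    cases v with
    | none => simp [hΦ₂, hw₂, hι]
    | some i =>
      have : i ≠ m := fun h => hv (by rw [h])
      simp [hΦ₂, hw₂, this, hι]
  have hΦ₂C : ∀ a : ℂ, Φ₂ (MvPolynomial.C a) = ι (MvPolynomial.C a) := by
    intro a
    rw [hΦ₂, MvPolynomial.aeval_C, hι, IsScalarTower.algebraMap_apply ℂ (MvPolynomial (Option (Fin n)) ℂ)
      (FractionRing (MvPolynomial (Option (Fin n)) ℂ)), MvPolynomial.algebraMap_eq]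
  have hΦ₂Φ₁ : ∀ f, Φ₂ (Φ₁ f) = ι f := by
    intro f
    induction f using MvPolynomial.induction_on with
    | C a =>
      have : Φ₁ (MvPolynomial.C a) = MvPolynomial.C a := by
        rw [hΦ₁, MvPolynomial.aeval_C, MvPolynomial.algebraMap_eq]
      rw [this, hΦ₂C]
    | add f f' hf hf' => rw [map_add, map_add, hf, hf', map_add]
    | mul_X f v hf =>
      rw [map_mul, map_mul, hf, map_mul]
      refine congrArg (fun y => ι f * y) ?_
      cases v with
      | none => rw [hΦo none (by simp), hΦ₂o none (by simp)]
      | some i =>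
        by_cases him : i = m
        · rw [him, hΦm, map_add, map_one, map_mul, map_sub, map_one, hΦ₂m,
            hΦ₂o (some p) (fun hh => hpm (Option.some_injective _ hh))]
          rw [div_mul_cancel₀ _ hh0]
          ring
        · rw [hΦo (some i) (fun hh => him (Option.some_injective _ hh)),
            hΦ₂o (some i) (fun hh => him (Option.some_injective _ hh))]
  have hbound : ∀ w : MvPolynomial (Option (Fin n)) ℂ, ∃ (k : ℕ)
      (t : MvPolynomial (Option (Fin n)) ℂ),
      (ι (X (some p)) - 1) ^ k * Φ₂ w = ι t := by
    intro w
    induction w using MvPolynomial.induction_on with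
    | C a => exact ⟨0, MvPolynomial.C a, by rw [pow_zero, one_mul, hΦ₂C]⟩
    | add f f' hf hf' =>
      obtain ⟨k, t, hk⟩ := hf
      obtain ⟨l, t', hl⟩ := hf'
      refine ⟨k + l, (X (some p) - 1) ^ l * t + (X (some p) - 1) ^ k * t', ?_⟩
      rw [map_add, map_add, map_mul, map_mul, map_pow, map_pow, map_sub, map_one,
        ← hk, ← hl]
      ring
    | mul_X f v hf =>
      obtain ⟨k, t, hk⟩ := hf
      by_cases hvm : v = some m
      · refine ⟨k + 1, t * (X (some m) - 1), ?_⟩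
        have hcancel : (ι (X (some p)) - 1) *
            ((ι (X (some m)) - 1) / (ι (X (some p)) - 1)) = ι (X (some m)) - 1 := by
          field_simp
        calc (ι (X (some p)) - 1) ^ (k + 1) * Φ₂ (f * X v)
            = ((ι (X (some p)) - 1) ^ k * Φ₂ f) *
              ((ι (X (some p)) - 1) * Φ₂ (X (some m))) := by rw [hvm, map_mul]; ring
          _ = ι t * (ι (X (some m)) - 1) := by rw [hk, hΦ₂m, hcancel]
          _ = ι (t * (X (some m) - 1)) := by rw [map_mul, map_sub, map_one]
      · refine ⟨k, t * X v, ?_⟩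
        calc (ι (X (some p)) - 1) ^ k * Φ₂ (f * X v)
            = ((ι (X (some p)) - 1) ^ k * Φ₂ f) * Φ₂ (X v) := by rw [map_mul]; ring
          _ = ι t * ι (X v) := by rw [hk, hΦ₂o v hvm]
          _ = ι (t * X v) := (map_mul ι t _).symm
  have hgne : ¬ (X (some p) - 1 : MvPolynomial (Option (Fin n)) ℂ) ∣ g := by
    intro hdvd
    obtain ⟨t, ht⟩ := hdvd
    set σg : Option (Fin n) → ℂ := fun v =>
      v.elim 1 (fun i => if i = m then 2 else if i = p then 1 else 0) with hσg
    have e1 : σg none = 1 := by simp [hσg]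
    have e2 : σg (some m) = 2 := by simp [hσg]
    have e3 : σg (some p) = 1 := by simp [hσg, hpm]
    have h1 : MvPolynomial.eval σg g = 2 := by
      simp only [hsplit, map_sub, map_mul, map_pow, map_one, MvPolynomial.eval_X]
      rw [e1, e2, e3]
      norm_num
    have h2 : MvPolynomial.eval σg g = 0 := by
      rw [ht, map_mul, map_sub, map_one, MvPolynomial.eval_X, e3]
      norm_num
    rw [h1] at h2
    norm_num at h2
  have descent : ∀ (N : ℕ) (f' : MvPolynomial (Option (Fin n)) ℂ),
      g ∣ f' * (X (some p) - 1) ^ N → g ∣ f' := by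
    intro N
    induction N with
    | zero => intro f' h; simpa using h
    | succ N ih =>
      intro f' h
      obtain ⟨t, ht⟩ := h
      have hht : (X (some p) - 1 : MvPolynomial (Option (Fin n)) ℂ) ∣ g * t :=
        ⟨f' * (X (some p) - 1) ^ N, by rw [← ht]; ring⟩
      obtain ⟨t', rfl⟩ := (hhp.dvd_mul.mp hht).resolve_left hgne
      apply ih
      refine ⟨t', ?_⟩
      have hcan : (f' * (X (some p) - 1) ^ N - g * t') * (X (some p) - 1) = 0 := by
        linear_combination ht
      rcases mul_eq_zero.mp hcan with h0 | h0
      · exact sub_eq_zero.mp h0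
      · exact absurd h0 hhp.ne_zero
  have hkerψ : RingHom.ker ψ.toRingHom = Ideal.span {g} := by
    apply le_antisymm
    · intro f hf
      rw [RingHom.mem_ker] at hf
      have h1 : Φ₁ f ∈ Ideal.span {g₁} := by
        rw [← hkerψ₁, RingHom.mem_ker]
        show ψ₁ (Φ₁ f) = 0
        rw [hcomp f]
        exact hf
      obtain ⟨w, hw⟩ := Ideal.mem_span_singleton.mp h1
      have hιg : ι g = (ι (X (some p)) - 1) ^ 2 * Φ₂ g₁ := by
        have h2 := hΦ₂Φ₁ g
        rw [hΦ₁g, map_mul, map_pow, map_sub, map_one,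
          hΦ₂o (some p) (fun hh => hpm (Option.some_injective _ hh))] at h2
        rw [← h2]
      obtain ⟨k, t, hkt⟩ := hbound w
      have hmain : ι (f * (X (some p) - 1) ^ (k + 2)) = ι (g * t) := by
        rw [map_mul, map_mul, map_pow, map_sub, map_one]
        calc ι f * (ι (X (some p)) - 1) ^ (k + 2)
            = ((ι (X (some p)) - 1) ^ 2 * Φ₂ g₁) * ((ι (X (some p)) - 1) ^ k * Φ₂ w) := by
              rw [← hΦ₂Φ₁ f, hw, map_mul]; ring
          _ = ι g * ι t := by rw [← hιg, hkt]
      have hfg : f * (X (some p) - 1) ^ (k + 2) = g * t := hinjR hmain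
      exact Ideal.mem_span_singleton.mpr (descent (k + 2) f ⟨t, hfg⟩)
    · rw [Ideal.span_le]
      intro x hx
      rw [Set.mem_singleton_iff] at hx
      subst hx
      rw [SetLike.mem_coe, RingHom.mem_ker]
      exact hψg
  -- domain
  haveI hprime : (Ideal.span {g}).IsPrime := by
    rw [← hkerψ]; exact RingHom.ker_isPrime _
  refine ⟨inferInstance, ?_⟩
  -- the induced injective map on the quotient
  set ψq : (MvPolynomial (Option (Fin n)) ℂ ⧸ Ideal.span {g}) →ₐ[ℂ]
      FractionRing (MvPolynomial (Fin n) ℂ) :=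
    Ideal.Quotient.liftₐ (Ideal.span {g}) ψ (by
      intro a ha
      have : a ∈ RingHom.ker ψ.toRingHom := by rw [hkerψ]; exact ha
      exact this) with hψq
  have hψqmk : ∀ f, ψq (Ideal.Quotient.mk (Ideal.span {g}) f) = ψ f := fun f => rfl
  have hψqinj : Function.Injective ψq := by
    intro a b hab
    obtain ⟨x, rfl⟩ := Ideal.Quotient.mk_surjective a
    obtain ⟨y, rfl⟩ := Ideal.Quotient.mk_surjective b
    rw [hψqmk, hψqmk] at hab
    apply Ideal.Quotient.eq.mpr
    rw [← hkerψ, RingHom.mem_ker]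
    show ψ (x - y) = 0
    rw [map_sub, sub_eq_zero]
    exact hab
  set τ : FractionRing (MvPolynomial (Option (Fin n)) ℂ ⧸ Ideal.span {g}) →ₐ[ℂ]
      FractionRing (MvPolynomial (Fin n) ℂ) :=
    IsFractionRing.liftAlgHom (R := ℂ) hψqinj with hτ
  have hτmk : ∀ f, τ (algebraMap (MvPolynomial (Option (Fin n)) ℂ ⧸ Ideal.span {g})
      (FractionRing (MvPolynomial (Option (Fin n)) ℂ ⧸ Ideal.span {g}))
      (Ideal.Quotient.mk (Ideal.span {g}) f)) = ψ f := by
    intro f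
    rw [hτ, IsFractionRing.liftAlgHom_apply, IsFractionRing.lift_algebraMap]
    exact hψqmk f
  have hτsurj : Function.Surjective τ := by
    set S := RingHom.fieldRange τ.toRingHom with hS
    have hmemS : ∀ x, x ∈ S → ∃ y, τ y = x := by
      intro x hx
      obtain ⟨y, hy⟩ := hx
      exact ⟨y, hy⟩
    have hS1 : ∀ f : MvPolynomial (Option (Fin n)) ℂ, ψ f ∈ S := by
      intro f
      exact ⟨algebraMap _ _ (Ideal.Quotient.mk (Ideal.span {g}) f), hτmk f⟩
    have hψp1 : ψ (X (some p) - 1) ≠ 0 := by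
      rw [map_sub, map_one, hval_p]
      have hβ1 : β - 1 = (Z ^ 4 * A ^ 2 - PP) / D := by
        rw [hβ, hD]
        have hD0' : PP - Z ^ 4 * A ^ 3 ≠ 0 := by rw [← hD]; exact hD0
        field_simp
        ring
      rw [hβ1]
      exact div_ne_zero hE0 hD0
    have hψm1 : ψ (X (some m) - 1) = A * ψ (X (some p) - 1) := by
      rw [map_sub, map_one, map_sub, map_one, hval_m, hval_p, hβ, hD]
      have hD0' : PP - Z ^ 4 * A ^ 3 ≠ 0 := by rw [← hD]; exact hD0
      rw [div_sub_one hD0', div_sub_one hD0', mul_div_assoc']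
      rw [div_left_inj' hD0']
      ring
    have hSA : A ∈ S := by
      have : A = ψ (X (some m) - 1) / ψ (X (some p) - 1) := by
        rw [hψm1, mul_div_assoc, div_self hψp1, mul_one]
      rw [this]
      exact S.div_mem (hS1 _) (hS1 _)
    have hSq : ∀ q : MvPolynomial (Fin n) ℂ,
        algebraMap (MvPolynomial (Fin n) ℂ) (FractionRing (MvPolynomial (Fin n) ℂ)) q ∈ S := by
      intro q
      induction q using MvPolynomial.induction_on with
      | C a =>
        have : algebraMap (MvPolynomial (Fin n) ℂ) (FractionRing (MvPolynomial (Fin n) ℂ))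
            (MvPolynomial.C a) = ψ (MvPolynomial.C a) := by
          rw [hψ, MvPolynomial.aeval_C, IsScalarTower.algebraMap_apply ℂ
            (MvPolynomial (Fin n) ℂ) (FractionRing (MvPolynomial (Fin n) ℂ)),
            MvPolynomial.algebraMap_eq]
        rw [this]
        exact hS1 _
      | add f f' hf hf' => rw [map_add]; exact S.add_mem hf hf'
      | mul_X f i hf =>
        rw [map_mul]
        refine S.mul_mem hf ?_
        by_cases him : i = m
        · rw [him, ← hZ, ← hval_z]; exact hS1 _
        · by_cases hip : i = p
          · rw [hip, ← hA]; exact hSA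
          · rw [← hval_i i him hip]; exact hS1 _
    intro x
    obtain ⟨a, b, -, rfl⟩ := IsFractionRing.div_surjective
      (A := MvPolynomial (Fin n) ℂ) x
    exact hmemS _ (S.div_mem (hSq a) (hSq b))
  exact ⟨AlgEquiv.ofBijective τ ⟨fun a b hab => by
    exact (IsFractionRing.lift (hψqinj)).injective hab, hτsurj⟩⟩
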